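/- Let π be a chordless s-t path in a simple graph G, and let x be any vertex of G not on π. Then x is adjacent to at most two vertices of π unless x is a good neighbour of some vertex of π; more precisely, if x is not a good neighbour of any vertex of π (no chordless s-t path has prefix v₀…vᵢx for any i), then x has at most two neighbours on π, and they are consecutive on π. -/

import Mathlib

open SimpleGraph

variable {V : Type*}

/-- `l` is a (simple) path in `G`, given as its list of vertices. -/
def IsPathL (G : SimpleGraph V) (l : List V) : Prop :=
  l.Chain' G.Adj ∧ l.Nodup

/-- `l` is an `s`-`t` path in `G`. -/
def IsStPathL (G : SimpleGraph V) (s t : V) (l : List V) : Prop :=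
  IsPathL G l ∧ l.head? = some s ∧ l.getLast? = some t

/-- No two non-consecutive vertices of `l` are adjacent in `G`. -/
def NoChord (G : SimpleGraph V) (l : List V) : Prop :=
  ∀ (i j : ℕ) (hi : i < l.length) (hj : j < l.length), i + 1 < j →
    ¬ G.Adj (l.get ⟨i, hi⟩) (l.get ⟨j, hj⟩)

/-- `l` is a chordless (induced) `s`-`t` path in `G`. -/
def IsChordlessStPathL (G : SimpleGraph V) (s t : V) (l : List V) : Prop :=
  IsStPathL G s t l ∧ NoChord G l

/-- `x` is a good neighbour of `vᵢ` (the `i`-th vertex of `l`): some chordless `s`-`t`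
path of `G` has `v₀ v₁ … vᵢ x` as a prefix. -/
def GoodNbr (G : SimpleGraph V) (s t : V) (l : List V) (i : ℕ) (x : V) : Prop :=
  ∃ l' : List V, IsChordlessStPathL G s t l' ∧ (l.take (i + 1) ++ [x]) <+: l'

/-- If `x ∉ π` is not a good neighbour of any vertex of a chordless `s`-`t` path `π`, then `x`
has at most two neighbours on `π`, and any two of its neighbours on `π` are consecutive. -/
theorem aux_getElem_congr {α : Type*} (l : List α) {k m : ℕ} (h : k = m)
    (hk : k < l.length) (hm : m < l.length) : l[k] = l[m] := by subst h; rfl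

theorem stmt5_main (G : SimpleGraph V) (s t : V) (l : List V) (x : V)
    (hl : IsChordlessStPathL G s t l)
    (hx : x ∉ l)
    (hnotgood : ∀ i : ℕ, ¬ GoodNbr G s t l i x) :
    ∀ (i j : ℕ) (hi : i < l.length) (hj : j < l.length),
      i + 1 < j → G.Adj x l[i] → G.Adj x l[j] → False := by
  classical
  obtain ⟨⟨⟨hchain, hnodup⟩, hhead, hlast⟩, hnochord⟩ := hl
  simp only [NoChord, List.get_eq_getElem] at hnochord
  intro i j hi hj hij hxi hxj
  set n := l.length with hn
  have hchainG : ∀ k (h1 : k < n) (h2 : k + 1 < n), G.Adj l[k] l[k+1] := by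
    have hc := List.isChain_iff_getElem.mp hchain
    intro k h1 h2
    simpa using hc k (by omega)
  set P : ℕ → Prop := fun k => ∃ hk : k < n, G.Adj x l[k] with hPdef
  have hex : ∃ k, P k := ⟨i, hi, hxi⟩
  set a := Nat.find hex with hadef
  set b := Nat.findGreatest P n with hbdef
  obtain ⟨ha, hxa⟩ : P a := Nat.find_spec hex
  obtain ⟨hb, hxb⟩ : P b := Nat.findGreatest_spec hj.le ⟨hj, hxj⟩
  have hai : a ≤ i := Nat.find_min' hex ⟨hi, hxi⟩
  have hjb : j ≤ b := Nat.le_findGreatest hj.le ⟨hj, hxj⟩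
  have hab : a + 1 < b := by omega
  have hmin : ∀ k (hk : k < n), k < a → ¬ G.Adj x l[k] := by
    intro k hk hka hadj
    exact Nat.find_min hex hka ⟨hk, hadj⟩
  have hmax : ∀ k (hk : k < n), b < k → ¬ G.Adj x l[k] := by
    intro k hk hkb hadj
    exact Nat.findGreatest_is_greatest hkb hk.le ⟨hk, hadj⟩
  set L := l.take (a+1) ++ x :: l.drop b with hLdef
  have ha1 : a + 1 ≤ n := ha
  have hlenT : (l.take (a+1)).length = a + 1 := by simp [List.length_take]; omega
  have hlen : L.length = a + 2 + (n - b) := by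
    simp [hLdef, List.length_append, hlenT]; omega
  have hget1 : ∀ (k : ℕ) (hk : k < a + 1) (hk' : k < L.length) (hk'' : k < n),
      L[k] = l[k] := by
    intro k hk hk' hk''
    simp only [hLdef]
    rw [List.getElem_append_left (by omega : k < (l.take (a+1)).length)]
    simp
  have hget2 : ∀ (k : ℕ) (hk' : k < L.length), k = a + 1 → L[k] = x := by
    intro k hk' hkeq
    subst hkeq
    simp only [hLdef]
    rw [List.getElem_append_right (by omega : (l.take (a+1)).length ≤ a + 1)]
    simp [hlenT]
  have hget3 : ∀ (k m : ℕ) (hk : a + 2 ≤ k) (hk' : k < L.length) (hm : m < n),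
      b + (k - (a + 2)) = m → L[k] = l[m] := by
    intro k m hk hk' hm hkm
    subst hkm
    simp only [hLdef]
    rw [List.getElem_append_right (by omega : (l.take (a+1)).length ≤ k)]
    have h1 : k - (l.take (a+1)).length = (k - (a + 2)) + 1 := by omega
    simp only [h1, List.getElem_cons_succ, List.getElem_drop]
  -- l is nonempty and starts with s
  have hn0 : 0 < n := by omega
  have htake_head : ∃ r, l.take (a+1) = s :: r := by
    cases l with
    | nil => simp [hn] at hn0
    | cons c r =>
      simp only [List.head?_cons, Option.some.injEq] at hhead
      exact ⟨r.take a, by simp [List.take_succ_cons, hhead]⟩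
  -- disjointness of take (a+1) and drop b
  have hdisj : List.Disjoint (l.take (a+1)) (l.drop b) := by
    have h1 : l.Nodup := hnodup
    rw [← List.take_append_drop (a+1) l] at h1
    have h2 := (List.nodup_append'.mp h1).2.2
    intro v hv hv'
    refine h2 hv ?_
    have : l.drop b = (l.drop (a+1)).drop (b - (a+1)) := by
      rw [List.drop_drop]; congr 1; omega
    rw [this] at hv'
    exact (List.drop_subset _ _) hv'
  apply hnotgood a
  refine ⟨L, ⟨⟨⟨?_, ?_⟩, ?_, ?_⟩, ?_⟩, ⟨l.drop b, by simp [hLdef]⟩⟩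
  · -- Chain'
    refine List.isChain_iff_getElem.mpr ?_
    intro k hk
    have hk' : k < L.length := by omega
    have hk1' : k + 1 < L.length := by omega
    rw [hlen] at hk
    rcases Nat.lt_or_ge k a with h | h
    · rw [hget1 k (by omega) hk' (by omega), hget1 (k+1) (by omega) hk1' (by omega)]
      exact hchainG k (by omega) (by omega)
    rcases Nat.eq_or_lt_of_le h with h' | h'
    · rw [hget1 k (by omega) hk' (by omega), hget2 (k+1) hk1' (by omega),
        aux_getElem_congr l (h'.symm) (by omega) (by omega)]
      exact hxa.symm
    rcases Nat.eq_or_lt_of_le h' with h'' | h''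
    · rw [hget2 k hk' (by omega), hget3 (k+1) b (by omega) hk1' (by omega) (by omega)]
      exact hxb
    · have e1 := hget3 k (b + (k - (a+2))) (by omega) hk' (by omega) rfl
      have e2 := hget3 (k+1) (b + (k - (a+2)) + 1) (by omega) hk1' (by omega) (by omega)
      rw [e1, e2]
      exact hchainG _ (by omega) (by omega)
  · -- Nodup
    simp only [hLdef]
    rw [List.nodup_append']
    refine ⟨hnodup.sublist (List.take_sublist _ _), ?_, ?_⟩
    · rw [List.nodup_cons]
      exact ⟨fun h => hx ((List.drop_subset _ _) h), hnodup.sublist (List.drop_sublist _ _)⟩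
    · intro v hv hv'
      rcases List.mem_cons.mp hv' with rfl | hv''
      · exact hx ((List.take_subset _ _) hv)
      · exact hdisj hv hv''
  · -- head?
    obtain ⟨r, hr⟩ := htake_head
    simp [hLdef, hr]
  · -- getLast?
    have hdropne : l.drop b ≠ [] := by
      intro h
      have := congrArg List.length h
      simp [hn] at this
      omega
    have hdl : (l.drop b).getLast? = some t := by
      obtain ⟨w, hw⟩ := Option.isSome_iff_exists.mp (List.getLast?_isSome.mpr hdropne)
      have : l.getLast? = some w := by
        conv_lhs => rw [← List.take_append_drop b l]
        rw [List.getLast?_append, hw]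
        rfl
      rw [hw, ← hlast, this]
    simp only [hLdef]
    rw [List.getLast?_append, show x :: l.drop b = [x] ++ l.drop b from rfl,
      List.getLast?_append, hdl]
    rfl
  · -- NoChord
    intro p q hp hq hpq hadj
    simp only [List.get_eq_getElem] at hadj
    rw [hlen] at hp hq
    have hp' : p < L.length := by omega
    have hq' : q < L.length := by omega
    rcases Nat.lt_or_ge q (a+1) with h | h
    · rw [hget1 p (by omega) hp' (by omega), hget1 q (by omega) hq' (by omega)] at hadj
      exact hnochord p q (by omega) (by omega) hpq hadj
    rcases Nat.eq_or_lt_of_le h with h' | h'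
    · rw [hget1 p (by omega) hp' (by omega), hget2 q hq' (by omega)] at hadj
      exact hmin p (by omega) (by omega) hadj.symm
    · -- q ≥ a + 2
      have hqm := hget3 q (b + (q - (a+2))) (by omega) hq' (by omega) rfl
      rcases Nat.lt_or_ge p (a+1) with g | g
      · rw [hget1 p (by omega) hp' (by omega), hqm] at hadj
        exact hnochord p _ (by omega) (by omega) (by omega) hadj
      rcases Nat.eq_or_lt_of_le g with g' | g'
      · rw [hget2 p hp' (by omega), hqm] at hadj
        exact hmax _ (by omega) (by omega) hadj
      · have hpm := hget3 p (b + (p - (a+2))) (by omega) hp' (by omega) rfl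
        rw [hpm, hqm] at hadj
        exact hnochord _ _ (by omega) (by omega) (by omega) hadj

theorem stmt5 (G : SimpleGraph V) (s t : V) (l : List V) (x : V)
    (hl : IsChordlessStPathL G s t l)
    (hx : x ∉ l)
    (hnotgood : ∀ i : ℕ, ¬ GoodNbr G s t l i x) :
    {v | v ∈ l ∧ G.Adj x v}.ncard ≤ 2 ∧
      ∀ (i j : ℕ) (hi : i < l.length) (hj : j < l.length),
        G.Adj x (l.get ⟨i, hi⟩) → G.Adj x (l.get ⟨j, hj⟩) → i ≤ j + 1 ∧ j ≤ i + 1 := by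
  classical
  have main := stmt5_main G s t l x hl hx hnotgood
  constructor
  · -- ncard ≤ 2
    by_cases hS : {v | v ∈ l ∧ G.Adj x v} = ∅
    · simp [hS]
    · obtain ⟨v0, hv0⟩ := Set.nonempty_iff_ne_empty.mpr hS
      obtain ⟨k0, hk0, hk0e⟩ := List.getElem_of_mem hv0.1
      have hex : ∃ k, ∃ hk : k < l.length, G.Adj x l[k] :=
        ⟨k0, hk0, by rw [hk0e]; exact hv0.2⟩
      set a := Nat.find hex with hadef
      obtain ⟨ha, hxa⟩ := Nat.find_spec hex
      have hsub : {v | v ∈ l ∧ G.Adj x v} ⊆ {l[a], l.getD (a+1) v0} := by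
        intro v hv
        simp only [Set.mem_insert_iff, Set.mem_singleton_iff]
        obtain ⟨k, hk, hke⟩ := List.getElem_of_mem hv.1
        have hadjk : G.Adj x l[k] := by rw [hke]; exact hv.2
        have hak : a ≤ k := Nat.find_min' hex ⟨hk, hadjk⟩
        have hk2 : ¬ (a + 1 < k) := fun h => main a k ha hk h hxa hadjk
        rcases Nat.eq_or_lt_of_le hak with h | h
        · left; rw [← hke]; exact aux_getElem_congr l h.symm hk ha
        · right
          have hk1 : k = a + 1 := by omega
          rw [List.getD_eq_getElem _ _ (by omega : a + 1 < l.length), ← hke]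
          exact aux_getElem_congr l hk1 hk (by omega)
      calc {v | v ∈ l ∧ G.Adj x v}.ncard ≤ ({l[a], l.getD (a+1) v0} : Set V).ncard :=
            Set.ncard_le_ncard hsub (Set.toFinite _)
        _ ≤ 2 := (Set.ncard_insert_le _ _).trans (by simp)
  · intro i j hi hj h1 h2
    simp only [List.get_eq_getElem] at h1 h2
    constructor
    · by_contra h
      exact main j i hj hi (by omega) h2 h1
    · by_contra h
      exact main i j hi hj (by omega) h1 h2
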